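/- For any weight vector w ∈ ℝ^n and reliability vector r ∈ (-1,1)^n, define φ(w,r) = -min_{t>0} (1/n)∑_i log((1/2)e^{t w_i}(1-r_i) + (1/2)e^{-t w_i}(1+r_i)) and Φ(r) = -(1/(2n))∑_i log(1-r_i²). Then φ(w,r) ≤ Φ(r), with equality when w_i = log((1+r_i)/(1-r_i)). -/
import Mathlib

lemma term_ge (a r : ℝ) (h1 : -1 < r) (h2 : r < 1) :
    Real.sqrt (1 - r ^ 2) ≤ (1/2) * Real.exp a * (1 - r) + (1/2) * Real.exp (-a) * (1 + r) := by
  have hx : 0 < Real.exp a := Real.exp_pos a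
  have hy : 0 < Real.exp (-a) := Real.exp_pos _
  have hxy : Real.exp a * Real.exp (-a) = 1 := by rw [← Real.exp_add]; simp
  have hs : Real.sqrt (1 - r ^ 2) ^ 2 = 1 - r ^ 2 := Real.sq_sqrt (by nlinarith)
  have hs0 : 0 ≤ Real.sqrt (1 - r ^ 2) := Real.sqrt_nonneg _
  set X := (1/2) * Real.exp a * (1 - r) with hX
  set Y := (1/2) * Real.exp (-a) * (1 + r) with hY
  have hXp : 0 < X := by rw [hX]; nlinarith
  have hYp : 0 < Y := by rw [hY]; nlinarith
  have hXY : X * Y = (1 - r ^ 2) / 4 := by rw [hX, hY]; nlinarith [hxy]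
  have h4 : Real.sqrt (1 - r ^ 2) ^ 2 ≤ (X + Y) ^ 2 := by nlinarith [sq_nonneg (X - Y)]
  exact le_of_pow_le_pow_left₀ two_ne_zero (by linarith) h4

lemma exp_half_log {x : ℝ} (hx : 0 < x) : Real.exp ((1/2) * Real.log x) = Real.sqrt x := by
  rw [show (1/2) * Real.log x = Real.log (Real.sqrt x) by rw [Real.log_sqrt hx.le]; ring,
    Real.exp_log (Real.sqrt_pos.mpr hx)]

/-- The Chernoff exponent `φ(w,r)` of weighted majority voting is at most the optimal
exponent `Φ(r) = -(1/(2n))∑ log(1 - rᵢ²)`, with equality for the Nitzan–Paroush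
weights `wᵢ = log((1+rᵢ)/(1-rᵢ))`. -/
theorem wmv_exponent_le_renyi
    (n : ℕ) (hn : 0 < n) (r : Fin n → ℝ) (hr : ∀ i, r i ∈ Set.Ioo (-1 : ℝ) 1)
    (Φ : ℝ) (hΦ : Φ = -(1 / (2 * n)) * ∑ i, Real.log (1 - r i ^ 2))
    (φ : (Fin n → ℝ) → ℝ)
    (hφ : ∀ w, φ w = -(⨅ t : {t : ℝ // 0 < t},
      (1 / n) * ∑ i, Real.log ((1 / 2) * Real.exp (t.1 * w i) * (1 - r i)
        + (1 / 2) * Real.exp (-(t.1 * w i)) * (1 + r i)))) :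
    (∀ w, φ w ≤ Φ) ∧ φ (fun i => Real.log ((1 + r i) / (1 - r i))) = Φ := by
  haveI : Nonempty {t : ℝ // 0 < t} := ⟨⟨1, one_pos⟩⟩
  have hn' : (0:ℝ) < n := by exact_mod_cast hn
  set c : ℝ := (1 / (2 * n)) * ∑ i, Real.log (1 - r i ^ 2) with hc
  have hΦc : Φ = -c := by rw [hΦ, hc]; ring
  have h2 : ((1:ℝ)/n) * ∑ i, (1/2) * Real.log (1 - r i ^ 2) = c := by
    rw [hc, Finset.mul_sum, Finset.mul_sum]
    exact Finset.sum_congr rfl fun i _ => by ring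
  -- the key lower bound, from AM-GM
  have key : ∀ (w : Fin n → ℝ) (t : {t : ℝ // 0 < t}),
      c ≤ (1 / n) * ∑ i, Real.log ((1 / 2) * Real.exp (t.1 * w i) * (1 - r i)
        + (1 / 2) * Real.exp (-(t.1 * w i)) * (1 + r i)) := by
    intro w t
    have h1 : ∀ i, (1/2) * Real.log (1 - r i ^ 2) ≤
        Real.log ((1 / 2) * Real.exp (t.1 * w i) * (1 - r i)
          + (1 / 2) * Real.exp (-(t.1 * w i)) * (1 + r i)) := by
      intro i
      obtain ⟨hr1, hr2⟩ := hr i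
      have hpos : 0 < 1 - r i ^ 2 := by nlinarith
      have hge := term_ge (t.1 * w i) (r i) hr1 hr2
      have hsp : 0 < Real.sqrt (1 - r i ^ 2) := Real.sqrt_pos.mpr hpos
      calc (1/2) * Real.log (1 - r i ^ 2)
          = Real.log (Real.sqrt (1 - r i ^ 2)) := by rw [Real.log_sqrt hpos.le]; ring
        _ ≤ _ := Real.log_le_log hsp hge
    have hsum := Finset.sum_le_sum (fun i (_ : i ∈ Finset.univ) => h1 i)
    calc c = ((1:ℝ)/n) * ∑ i, (1/2) * Real.log (1 - r i ^ 2) := h2.symm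
      _ ≤ _ := mul_le_mul_of_nonneg_left hsum (by positivity)
  constructor
  · intro w
    rw [hφ, hΦc]
    exact neg_le_neg (le_ciInf (key w))
  · rw [hφ, hΦc]
    congr 1
    set w : Fin n → ℝ := fun i => Real.log ((1 + r i) / (1 - r i)) with hw
    refine le_antisymm ?_ (le_ciInf (key w))
    have hbdd : BddBelow (Set.range (fun t : {t : ℝ // 0 < t} =>
        (1 / n : ℝ) * ∑ i, Real.log ((1 / 2) * Real.exp (t.1 * w i) * (1 - r i)
          + (1 / 2) * Real.exp (-(t.1 * w i)) * (1 + r i)))) := by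
      refine ⟨c, ?_⟩
      rintro x ⟨t, rfl⟩
      exact key w t
    set t₀ : {t : ℝ // 0 < t} := ⟨1/2, by norm_num⟩ with ht₀
    have hle := ciInf_le hbdd t₀
    refine hle.trans_eq ?_
    have ht : ∀ i, (1 / 2) * Real.exp ((t₀ : ℝ) * w i) * (1 - r i)
        + (1 / 2) * Real.exp (-((t₀ : ℝ) * w i)) * (1 + r i) = Real.sqrt (1 - r i ^ 2) := by
      intro i
      obtain ⟨hr1, hr2⟩ := hr i
      have hp : 0 < 1 + r i := by linarith
      have hm : 0 < 1 - r i := by linarith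
      have hq : 0 < (1 + r i) / (1 - r i) := by positivity
      have hcoe : (t₀ : ℝ) = 1/2 := rfl
      rw [hcoe, hw]
      simp only
      rw [exp_half_log hq, Real.exp_neg, exp_half_log hq,
        show (1:ℝ) - r i ^ 2 = (1 + r i) * (1 - r i) by ring,
        Real.sqrt_mul hp.le, Real.sqrt_div hp.le]
      set s1 := Real.sqrt (1 + r i) with hs1d
      set s2 := Real.sqrt (1 - r i) with hs2d
      have hs1 : s1 ^ 2 = 1 + r i := Real.sq_sqrt hp.le
      have hs2 : s2 ^ 2 = 1 - r i := Real.sq_sqrt hm.le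
      have hs1p : 0 < s1 := Real.sqrt_pos.mpr hp
      have hs2p : 0 < s2 := Real.sqrt_pos.mpr hm
      rw [← hs1, ← hs2]
      field_simp
      ring
    have hlog : ∀ i ∈ Finset.univ, Real.log ((1 / 2) * Real.exp ((t₀ : ℝ) * w i) * (1 - r i)
        + (1 / 2) * Real.exp (-((t₀ : ℝ) * w i)) * (1 + r i))
        = (1/2) * Real.log (1 - r i ^ 2) := by
      intro i _
      obtain ⟨hr1, hr2⟩ := hr i
      have hpos : 0 < 1 - r i ^ 2 := by nlinarith
      rw [ht i, Real.log_sqrt hpos.le]; ring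
    rw [Finset.sum_congr rfl hlog]
    exact h2
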